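/- For every R > 0 there exists a constant C > 0 (depending only on R) such that for all integers ℓ ≥ 2, 0 ≤ i ≤ ℓ−1, and all x = (x_0, …, x_{ℓ−2}) ∈ [−R, R]^{ℓ−1}: |det(P^{(−i)}(x))| ≤ 2^{C · ℓ · log ℓ} · ∏_{0 ≤ c_1 < c_2 ≤ ℓ−2} |x_{c_1} − x_{c_2}|. -/

import Mathlib

open Finset Real

/-- Probabilists' Hermite polynomial evaluated at a real number. -/
noncomputable def hermiteR (j : ℕ) (x : ℝ) : ℝ := Polynomial.aeval x (Polynomial.hermite j)


open Polynomial
open Polynomial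

lemma derivative_hermite (n : ℕ) :
    derivative (hermite n) = C (n : ℤ) * hermite (n - 1) := by
  induction n using Nat.strong_induction_on with
  | _ n ih =>
    match n with
    | 0 => simp [hermite_zero]
    | 1 => simp [hermite_one, hermite_zero]
    | (j+2) =>
      rw [hermite_succ, derivative_sub, derivative_mul, derivative_X, one_mul,
        ih (j+1) (by omega)]
      simp only [show (j+1 : ℕ) - 1 = j from rfl, show (j+2 : ℕ) - 1 = j + 1 from rfl]
      rw [derivative_mul, derivative_C, zero_mul, zero_add, ih j (by omega)]
      have hs : X * hermite j - derivative (hermite j) = hermite (j+1) := (hermite_succ j).symm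
      rw [ih j (by omega)] at hs
      push_cast
      simp only [map_add, map_one, map_ofNat]
      linear_combination ((C (j:ℤ) + 1) : ℤ[X]) * hs

/-- Hermite polynomial over ℝ. -/
noncomputable def HR (n : ℕ) : Polynomial ℝ := (hermite n).map (Int.castRingHom ℝ)

lemma X_mul_HR (k : ℕ) : X * HR k = HR (k+1) + C (k:ℝ) * HR (k-1) := by
  have h := congrArg (Polynomial.map (Int.castRingHom ℝ)) (hermite_succ k)
  rw [Polynomial.map_sub, Polynomial.map_mul, map_X] at h
  rw [derivative_hermite, Polynomial.map_mul, map_C] at h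
  simp only [eq_comm, HR] at h ⊢
  rw [h]
  simp only [Int.coe_castRingHom, Int.cast_natCast]
  ring

/-- Coefficients of `X^n` in the Hermite basis. -/
noncomputable def bcoef : ℕ → ℕ → ℝ
  | 0, 0 => 1
  | 0, _+1 => 0
  | n+1, 0 => bcoef n 1
  | n+1, k+1 => bcoef n k + ((k:ℝ)+2) * bcoef n (k+2)

lemma bcoef_nonneg : ∀ n k, 0 ≤ bcoef n k
  | 0, 0 => le_refl _ |>.trans (by norm_num [bcoef])
  | 0, _+1 => le_of_eq rfl
  | n+1, 0 => bcoef_nonneg n 1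
  | n+1, k+1 => by
      have h1 := bcoef_nonneg n k
      have h2 := bcoef_nonneg n (k+2)
      simp only [bcoef]; positivity

lemma bcoef_eq_zero_of_lt : ∀ n k, n < k → bcoef n k = 0
  | 0, _+1, _ => rfl
  | n+1, k+1, h => by
      simp only [bcoef]
      rw [bcoef_eq_zero_of_lt n k (by omega), bcoef_eq_zero_of_lt n (k+2) (by omega)]
      ring

lemma bcoef_le_factorial : ∀ n k, bcoef n k ≤ n.factorial
  | 0, 0 => by norm_num [bcoef]
  | 0, k+1 => by norm_num [bcoef, bcoef_eq_zero_of_lt 0 (k+1) (by omega)]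
  | n+1, 0 => by
      refine (bcoef_le_factorial n 1).trans ?_
      exact_mod_cast Nat.cast_le.2 (Nat.factorial_le (by omega))
  | n+1, k+1 => by
      simp only [bcoef]
      rcases le_or_gt (k+2) n with h | h
      · have h1 := bcoef_le_factorial n k
        have h2 := bcoef_le_factorial n (k+2)
        have : ((k:ℝ)+2) * bcoef n (k+2) ≤ n * n.factorial := by
          apply mul_le_mul _ h2 (bcoef_nonneg _ _) (by positivity)
          · exact_mod_cast Nat.cast_le.2 h
        calc bcoef n k + ((k:ℝ)+2) * bcoef n (k+2) ≤ n.factorial + n * n.factorial := by linarith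
        _ = (n+1).factorial := by rw [Nat.factorial_succ]; push_cast; ring
      · rw [bcoef_eq_zero_of_lt n (k+2) h]
        have h1 := bcoef_le_factorial n k
        have : (n.factorial : ℝ) ≤ (n+1).factorial := by
          exact_mod_cast Nat.factorial_le (by omega)
        linarith

lemma X_pow_eq_sum_HR (n : ℕ) :
    (X : Polynomial ℝ)^n = ∑ k ∈ Finset.range (n+1), C (bcoef n k) * HR k := by
  induction n with
  | zero => simp [bcoef, HR, hermite_zero]
  | succ n ih =>
    have h1 : (X : Polynomial ℝ)^(n+1) = X * X^n := by ring
    rw [h1, ih, Finset.mul_sum]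
    have h2 : ∀ k, X * (C (bcoef n k) * HR k)
        = C (bcoef n k) * HR (k+1) + C ((k:ℝ) * bcoef n k) * HR (k-1) := by
      intro k
      rw [show X * (C (bcoef n k) * HR k) = C (bcoef n k) * (X * HR k) by ring, X_mul_HR]
      rw [map_mul]
      ring
    simp_rw [h2]
    rw [Finset.sum_add_distrib]
    have hrhs : ∑ j ∈ Finset.range (n+2), C (bcoef (n+1) j) * HR j
        = (∑ t ∈ Finset.range (n+1), C (bcoef n t) * HR (t+1))
          + (∑ t ∈ Finset.range (n+1), C (((t:ℝ)+2) * bcoef n (t+2)) * HR (t+1)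
              + C (bcoef n 1) * HR 0) := by
      rw [Finset.sum_range_succ' (fun j => C (bcoef (n+1) j) * HR j) (n+1)]
      have : ∀ t, C (bcoef (n+1) (t+1)) * HR (t+1)
          = C (bcoef n t) * HR (t+1) + C (((t:ℝ)+2) * bcoef n (t+2)) * HR (t+1) := by
        intro t
        simp only [bcoef]
        rw [map_add, map_mul]
        ring
      simp_rw [this]
      rw [Finset.sum_add_distrib]
      simp only [bcoef]
      ring
    rw [hrhs]
    congr 1
    -- remaining: ∑ k ∈ range (n+1), C (k * b n k) * HR (k-1) = ∑ t..., + C (b n 1) * HR 0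
    have hlhs : ∑ k ∈ Finset.range (n+1), C ((k:ℝ) * bcoef n k) * HR (k-1)
        = ∑ t ∈ Finset.range n, C (((t:ℝ)+1) * bcoef n (t+1)) * HR t := by
      rw [Finset.sum_range_succ' (fun k => C ((k:ℝ) * bcoef n k) * HR (k-1)) n]
      simp only [Nat.cast_zero, zero_mul, map_zero, zero_mul, add_zero]
      push_cast
      simp
    rw [hlhs]
    have hrhs2 : (∑ t ∈ Finset.range (n+1), C (((t:ℝ)+2) * bcoef n (t+2)) * HR (t+1))
          + C (bcoef n 1) * HR 0
        = ∑ t ∈ Finset.range (n+2), C (((t:ℝ)+1) * bcoef n (t+1)) * HR t := by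
      rw [Finset.sum_range_succ' (fun t => C (((t:ℝ)+1) * bcoef n (t+1)) * HR t) (n+1)]
      congr 1
      · refine Finset.sum_congr rfl fun x _ => ?_
        push_cast
        ring
      · norm_num
    rw [hrhs2, Finset.sum_range_succ, Finset.sum_range_succ,
      bcoef_eq_zero_of_lt n (n+1) (by omega), bcoef_eq_zero_of_lt n (n+2) (by omega)]
    simp

lemma coeff_prod_bound {ι : Type*} [DecidableEq ι] (M : ℝ) (hM : 1 ≤ M) (f : ι → ℝ)
    (s : Finset ι) (hf : ∀ i ∈ s, |f i| ≤ M) :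
    ∀ k, |(∏ i ∈ s, (C (f i) - X)).coeff k| ≤ (2*M)^s.card := by
  induction s using Finset.induction_on with
  | empty =>
    intro k
    simp only [Finset.prod_empty, Finset.card_empty, pow_zero, coeff_one]
    split <;> simp
  | @insert a s ha ih =>
    intro k
    have hfa : |f a| ≤ M := hf a (Finset.mem_insert_self a s)
    have ih' := ih (fun i hi => hf i (Finset.mem_insert_of_mem hi))
    rw [Finset.prod_insert ha, Finset.card_insert_of_notMem ha]
    have hexp : ((C (f a) - X) * ∏ i ∈ s, (C (f i) - X))
        = C (f a) * (∏ i ∈ s, (C (f i) - X)) - X * (∏ i ∈ s, (C (f i) - X)) := by ring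
    rw [hexp]
    set p := ∏ i ∈ s, (C (f i) - X) with hp
    have hXp : ∀ k, |(X * p).coeff k| ≤ (2*M)^s.card := by
      intro k
      cases k with
      | zero => simp [coeff_zero_eq_eval_zero]; positivity
      | succ k' => rw [coeff_X_mul]; exact ih' k'
    rw [coeff_sub, coeff_C_mul]
    calc |f a * p.coeff k - (X*p).coeff k| ≤ |f a * p.coeff k| + |(X*p).coeff k| :=
          abs_sub _ _
      _ = |f a| * |p.coeff k| + |(X*p).coeff k| := by rw [abs_mul]
      _ ≤ M * (2*M)^s.card + (2*M)^s.card := by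
          have h1 := ih' k
          have h2 := hXp k
          have h0 : (0:ℝ) ≤ |f a| := abs_nonneg _
          nlinarith [abs_nonneg (p.coeff k), abs_nonneg ((X*p).coeff k)]
      _ ≤ (2*M)^(s.card + 1) := by
          rw [pow_succ]
          have hpow : (0:ℝ) ≤ (2*M)^s.card := by positivity
          nlinarith

lemma prod_pairs (m : ℕ) (g : Fin m → Fin m → ℝ) :
    ∏ p ∈ Finset.univ.filter (fun p : Fin m × Fin m => p.1 < p.2), g p.1 p.2
      = ∏ i : Fin m, ∏ j ∈ Finset.Ioi i, g i j := by
  rw [Finset.prod_sigma' Finset.univ (fun i => Finset.Ioi i) (fun i j => g i j)]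
  refine Finset.prod_bij (fun (p : Fin m × Fin m) _ => (⟨p.1, p.2⟩ : (_ : Fin m) × Fin m)) ?_ ?_ ?_ ?_
  · intro p hp
    simp only [Finset.mem_filter, Finset.mem_univ, true_and] at hp
    simp [Finset.mem_sigma, Finset.mem_Ioi, hp]
  · intro p hp q hq h
    simp only [Sigma.mk.inj_iff, heq_eq_eq] at h
    exact Prod.ext h.1 h.2
  · intro p hp
    simp only [Finset.mem_sigma, Finset.mem_univ, Finset.mem_Ioi, true_and] at hp
    exact ⟨(p.1, p.2), by simp [hp], rfl⟩
  · intro p hp; rfl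

lemma hermiteR_eq_eval (j : ℕ) (y : ℝ) : hermiteR j y = (HR j).eval y := by
  rw [hermiteR, HR, Polynomial.aeval_def, ← Polynomial.eval_map]
  norm_num [Polynomial.eval_map, algebraMap_int_eq]

lemma natDegree_HR (j : ℕ) : (HR j).natDegree = j := by
  rw [HR, (hermite_monic j).natDegree_map, natDegree_hermite]

lemma dets_bound (m : ℕ) (M : ℝ) (hM : 1 ≤ M) (x : Fin m → ℝ) (hx : ∀ c, |x c| ≤ M)
    (i : Fin (m+1)) :
    |(Matrix.of fun r c : Fin m => hermiteR (i.succAbove r) (x c)).det|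
      ≤ ((m+1) * m.factorial * (2*M)^m) *
        ∏ r : Fin m, ∏ j ∈ Finset.Ioi r, |x j - x r| := by
  classical
  set Amat : Matrix (Fin (m+1)) (Fin (m+1)) ℝ :=
    Matrix.of (fun r k : Fin (m+1) => ((hermite (r:ℕ)).coeff (k:ℕ) : ℝ)) with hAdef
  set Bmat : Matrix (Fin (m+1)) (Fin (m+1)) ℝ :=
    Matrix.of (fun n k : Fin (m+1) => bcoef (n:ℕ) (k:ℕ)) with hBdef
  have hHRcoeff : ∀ r k : ℕ, (HR r).coeff k = ((hermite r).coeff k : ℝ) := by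
    intro r k
    rw [HR, Polynomial.coeff_map]
    simp
  -- B * A = 1
  have hBA : Bmat * Amat = 1 := by
    ext n j
    rw [Matrix.mul_apply]
    have hxp := congrArg (fun p : Polynomial ℝ => p.coeff (j:ℕ)) (X_pow_eq_sum_HR (n:ℕ))
    simp only [Polynomial.coeff_X_pow, Polynomial.finset_sum_coeff,
      Polynomial.coeff_C_mul] at hxp
    have hext : ∑ k ∈ Finset.range ((n:ℕ)+1), bcoef (n:ℕ) k * (HR k).coeff (j:ℕ)
        = ∑ k ∈ Finset.range (m+1), bcoef (n:ℕ) k * (HR k).coeff (j:ℕ) := by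
      refine Finset.sum_subset ?_ ?_
      · exact Finset.range_subset_range.2 (by omega)
      · intro k _ hk
        rw [bcoef_eq_zero_of_lt (n:ℕ) k (by simp only [Finset.mem_range] at hk ⊢; omega)]
        ring
    rw [hext] at hxp
    rw [show (∑ k : Fin (m+1), Bmat n k * Amat k j)
        = ∑ k ∈ Finset.range (m+1), bcoef (n:ℕ) k * (HR k).coeff (j:ℕ) from ?_]
    · rw [← hxp, Matrix.one_apply]
      simp [Fin.ext_iff, eq_comm]
    · rw [← Fin.sum_univ_eq_sum_range (fun k => bcoef (n:ℕ) k * (HR k).coeff (j:ℕ)) (m+1)]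
      refine Finset.sum_congr rfl fun k _ => ?_
      rw [hHRcoeff]
      rfl
  have hAB : Amat * Bmat = 1 := mul_eq_one_comm.mp hBA
  -- determinant of Amat
  have hdetA : Amat.det = 1 := by
    rw [Matrix.det_of_lowerTriangular Amat ?_]
    · simp [hAdef, coeff_hermite_self]
    · intro r k h
      have : (r:ℕ) < (k:ℕ) := h
      simp [hAdef, coeff_hermite_of_lt this]
  -- the polynomial matrices
  set v : Fin (m+1) → Polynomial ℝ :=
    fun c => Fin.cases X (fun c' => Polynomial.C (x c')) c with hvdef
  set Pmat : Matrix (Fin (m+1)) (Fin (m+1)) (Polynomial ℝ) :=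
    Matrix.of (fun k c : Fin (m+1) => (v c)^(k:ℕ)) with hPdef
  set Vprod : ℝ := ∏ r : Fin m, ∏ j ∈ Finset.Ioi r, (x j - x r) with hVdef
  have hPdet : Pmat.det = (∏ j : Fin m, (Polynomial.C (x j) - X)) * Polynomial.C Vprod := by
    have ht : Pmat = (Matrix.vandermonde v).transpose := by
      ext k c
      simp [hPdef, Matrix.vandermonde]
    rw [ht, Matrix.det_transpose, Matrix.det_vandermonde]
    rw [Fin.prod_univ_succ]
    congr 1
    · rw [Fin.prod_Ioi_zero]
      refine Finset.prod_congr rfl fun j _ => ?_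
      simp [hvdef]
    · rw [hVdef, map_prod]
      refine Finset.prod_congr rfl fun r _ => ?_
      rw [Fin.prod_Ioi_succ, map_prod]
      refine Finset.prod_congr rfl fun j _ => ?_
      simp [hvdef]
  set Hplus : Matrix (Fin (m+1)) (Fin (m+1)) (Polynomial ℝ) :=
    Matrix.of (fun r c : Fin (m+1) =>
      Fin.cases (HR (r:ℕ)) (fun c' => Polynomial.C (hermiteR (r:ℕ) (x c'))) c) with hHdef
  have hfact : Hplus = Amat.map Polynomial.C * Pmat := by
    refine Matrix.ext fun r c => ?_
    rw [Matrix.mul_apply]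
    induction c using Fin.cases with
    | zero =>
      have hdeg : (HR (r:ℕ)).natDegree < m + 1 := by
        rw [natDegree_HR]; omega
      have := Polynomial.as_sum_range' (HR (r:ℕ)) (m+1) hdeg
      simp only [hHdef, Matrix.of_apply, Fin.cases_zero]
      rw [this, ← Fin.sum_univ_eq_sum_range
        (fun k => Polynomial.monomial k ((HR (r:ℕ)).coeff k)) (m+1)]
      refine Finset.sum_congr rfl fun k _ => ?_
      rw [hHRcoeff, ← Polynomial.C_mul_X_pow_eq_monomial]
      simp [hAdef, hvdef, hPdef]
    | succ c' =>
      have hdeg : (HR (r:ℕ)).natDegree < m + 1 := by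
        rw [natDegree_HR]; omega
      simp only [hHdef, Matrix.of_apply, Fin.cases_succ]
      rw [hermiteR_eq_eval, Polynomial.eval_eq_sum_range' hdeg,
        ← Fin.sum_univ_eq_sum_range (fun k => (HR (r:ℕ)).coeff k * (x c')^k) (m+1), map_sum]
      refine Finset.sum_congr rfl fun k _ => ?_
      rw [hHRcoeff, map_mul, map_pow]
      simp [hAdef, hvdef, hPdef]
  have hdetH : Hplus.det = (∏ j : Fin m, (Polynomial.C (x j) - X)) * Polynomial.C Vprod := by
    rw [hfact, Matrix.det_mul, ← RingHom.mapMatrix_apply, ← RingHom.map_det, hdetA, map_one,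
      one_mul, hPdet]
  set dets : Fin (m+1) → ℝ :=
    fun t => (Matrix.of fun r c : Fin m => hermiteR (t.succAbove r) (x c)).det with hdets
  have hexp : Hplus.det
      = ∑ t : Fin (m+1), Polynomial.C ((-1)^(t:ℕ) * dets t) * HR (t:ℕ) := by
    rw [Matrix.det_succ_column_zero]
    refine Finset.sum_congr rfl fun t _ => ?_
    have hsub : Hplus.submatrix t.succAbove Fin.succ
        = (Matrix.of fun r c : Fin m => hermiteR (t.succAbove r) (x c)).map Polynomial.C := by
      refine Matrix.ext fun r c => ?_
      simp [hHdef]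
    rw [hsub, ← RingHom.mapMatrix_apply, ← RingHom.map_det]
    have h0 : Hplus t 0 = HR (t:ℕ) := by simp [hHdef]
    rw [h0, hdets, map_mul, map_pow, map_neg, map_one]
    ring
  set wc : ℕ → ℝ := fun k => (∏ j : Fin m, (Polynomial.C (x j) - X)).coeff k with hwc
  have hco : ∀ k : Fin (m+1),
      (∑ t : Fin (m+1), ((-1)^(t:ℕ) * dets t) * Amat t k) = Vprod * wc (k:ℕ) := by
    intro k
    have h := congrArg (fun p : Polynomial ℝ => p.coeff (k:ℕ)) (hexp.symm.trans hdetH)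
    simp only [Polynomial.finset_sum_coeff, Polynomial.coeff_C_mul,
      Polynomial.coeff_mul_C] at h
    rw [show (∑ t : Fin (m+1), ((-1)^(t:ℕ) * dets t) * Amat t k)
        = ∑ t : Fin (m+1), (-1)^(t:ℕ) * dets t * (HR (t:ℕ)).coeff (k:ℕ) from ?_]
    · rw [h]; ring
    · refine Finset.sum_congr rfl fun t _ => ?_
      rw [hHRcoeff]
      rfl
  have hkey : ∀ i' : Fin (m+1),
      (-1)^((i':ℕ)) * dets i' = ∑ k : Fin (m+1), (Vprod * wc (k:ℕ)) * Bmat k i' := by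
    intro i'
    have e2 : ∑ k : Fin (m+1), (∑ t : Fin (m+1), ((-1)^(t:ℕ) * dets t) * Amat t k) * Bmat k i'
        = (-1)^((i':ℕ)) * dets i' := by
      simp_rw [Finset.sum_mul]
      rw [Finset.sum_comm]
      simp_rw [mul_assoc, ← Finset.mul_sum, ← Matrix.mul_apply, hAB, Matrix.one_apply]
      simp
    rw [← e2]
    refine Finset.sum_congr rfl fun k _ => ?_
    rw [hco k]
  have habs : |dets i| ≤ (m+1) * (|Vprod| * ((2*M)^m * m.factorial)) := by
    have h1 : |dets i| = |(-1)^((i:ℕ)) * dets i| := by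
      rw [abs_mul, abs_pow, abs_neg, abs_one, one_pow, one_mul]
    rw [h1, hkey i]
    refine (Finset.abs_sum_le_sum_abs _ _).trans ?_
    have hterm : ∀ k : Fin (m+1), |(Vprod * wc (k:ℕ)) * Bmat k i|
        ≤ |Vprod| * ((2*M)^m * m.factorial) := by
      intro k
      rw [abs_mul, abs_mul]
      have hw : |wc (k:ℕ)| ≤ (2*M)^m := by
        have := coeff_prod_bound M hM x Finset.univ (fun c _ => hx c) (k:ℕ)
        rwa [Finset.card_univ, Fintype.card_fin] at this
      have hb : |Bmat k i| ≤ m.factorial := by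
        simp only [hBdef, Matrix.of_apply]
        rw [abs_of_nonneg (bcoef_nonneg _ _)]
        refine (bcoef_le_factorial _ _).trans ?_
        exact_mod_cast Nat.cast_le.2 (Nat.factorial_le (Fin.is_le k))
      rw [mul_assoc]
      have h3 : |wc (k:ℕ)| * |Bmat k i| ≤ (2*M)^m * m.factorial :=
        mul_le_mul hw hb (abs_nonneg _) (by positivity)
      exact mul_le_mul_of_nonneg_left h3 (abs_nonneg _)
    refine (Finset.sum_le_sum fun k _ => hterm k).trans ?_
    rw [Finset.sum_const, Finset.card_univ, Fintype.card_fin]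
    simp [nsmul_eq_mul]
  have hV : |Vprod| = ∏ r : Fin m, ∏ j ∈ Finset.Ioi r, |x j - x r| := by
    rw [hVdef, Finset.abs_prod]
    exact Finset.prod_congr rfl fun r _ => Finset.abs_prod _ _
  calc |(Matrix.of fun r c : Fin m => hermiteR (i.succAbove r) (x c)).det|
      = |dets i| := by rw [hdets]
    _ ≤ (m+1) * (|Vprod| * ((2*M)^m * m.factorial)) := habs
    _ = ((m+1) * m.factorial * (2*M)^m) * ∏ r : Fin m, ∏ j ∈ Finset.Ioi r, |x j - x r| := by
        rw [hV]; ring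

/-- For every `R > 0` there exists `C > 0` (depending only on `R`) such that for all `ℓ ≥ 2`
(written as `ℓ = m + 1` with `m ≥ 1`), `0 ≤ i ≤ ℓ-1`, and all `x ∈ [-R,R]^{ℓ-1}`:
`|det(P^{(-i)}(x))| ≤ 2^{C·ℓ·log ℓ} · ∏_{c₁<c₂} |x_{c₁} - x_{c₂}|`, where `P^{(-i)}(x)` is the
`(ℓ-1)×(ℓ-1)` matrix with rows indexed by `{0,…,ℓ-1}∖{i}` (in increasing order, via
`Fin.succAbove`) and `(r,c)`-entry `h_r(x_c)`. -/
theorem abs_det_hermite_deleteRow_le (R : ℝ) (hR : 0 < R) :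
    ∃ C : ℝ, 0 < C ∧
      ∀ (m : ℕ), 1 ≤ m → ∀ i : Fin (m + 1), ∀ x : Fin m → ℝ,
        (∀ c, x c ∈ Set.Icc (-R) R) →
          |(Matrix.of fun r c : Fin m => hermiteR (i.succAbove r) (x c)).det| ≤
            (2 : ℝ) ^ (C * (m + 1 : ℝ) * Real.log (m + 1 : ℝ)) *
              ∏ p ∈ Finset.univ.filter (fun p : Fin m × Fin m => p.1 < p.2), |x p.1 - x p.2| := by
  set M : ℝ := max 1 R with hMdef
  have hM : 1 ≤ M := le_max_left _ _
  have hM0 : (0:ℝ) < M := lt_of_lt_of_le one_pos hM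
  have hlog2 : 0 < Real.log 2 := Real.log_pos (by norm_num)
  have hlogM : 0 ≤ Real.log M := Real.log_nonneg hM
  refine ⟨(2 + Real.log M / Real.log 2) / Real.log 2, ?_, ?_⟩
  · positivity
  intro m hm i x hx
  set C : ℝ := (2 + Real.log M / Real.log 2) / Real.log 2 with hCdef
  have hx' : ∀ c, |x c| ≤ M := by
    intro c
    rcases hx c with ⟨h1, h2⟩
    rw [abs_le]
    constructor <;> [linarith [neg_le_neg (le_max_right 1 R)]; linarith [le_max_right 1 R]]
  have hprod : ∏ p ∈ Finset.univ.filter (fun p : Fin m × Fin m => p.1 < p.2), |x p.1 - x p.2|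
      = ∏ r : Fin m, ∏ j ∈ Finset.Ioi r, |x j - x r| := by
    rw [prod_pairs m (fun a b => |x a - x b|)]
    exact Finset.prod_congr rfl fun r _ =>
      Finset.prod_congr rfl fun j _ => abs_sub_comm _ _
  rw [hprod]
  refine (dets_bound m M hM x hx' i).trans ?_
  have hprodnn : (0:ℝ) ≤ ∏ r : Fin m, ∏ j ∈ Finset.Ioi r, |x j - x r| :=
    Finset.prod_nonneg fun r _ => Finset.prod_nonneg fun j _ => abs_nonneg _
  refine mul_le_mul_of_nonneg_right ?_ hprodnn
  -- numeric bound
  have hstep1 : ((m:ℝ)+1) * m.factorial * (2*M)^m ≤ (2*M*((m:ℝ)+1))^(m+1) := by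
    have hfac : (m.factorial : ℝ) ≤ ((m:ℝ)+1)^m := by
      calc (m.factorial : ℝ) ≤ (m:ℝ)^m := by exact_mod_cast Nat.factorial_le_pow m
        _ ≤ ((m:ℝ)+1)^m := by
            apply pow_le_pow_left₀ (by positivity)
            linarith
    have h2M : (1:ℝ) ≤ 2*M := by linarith
    calc ((m:ℝ)+1) * m.factorial * (2*M)^m
        ≤ ((m:ℝ)+1) * ((m:ℝ)+1)^m * (2*M)^m := by
          refine mul_le_mul_of_nonneg_right ?_ (by positivity)
          exact mul_le_mul_of_nonneg_left hfac (by positivity)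
      _ = ((m:ℝ)+1)^(m+1) * (2*M)^m := by rw [pow_succ]; ring
      _ ≤ ((m:ℝ)+1)^(m+1) * (2*M)^(m+1) := by
          apply mul_le_mul_of_nonneg_left (pow_le_pow_right₀ h2M (by omega)) (by positivity)
      _ = (2*M*((m:ℝ)+1))^(m+1) := by rw [mul_pow, mul_pow, mul_comm]; rw [mul_pow]
  refine hstep1.trans ?_
  set B : ℝ := 2*M*((m:ℝ)+1) with hBdef2
  have hB1 : (1:ℝ) < B := by
    have : (1:ℝ) ≤ (m:ℝ) := by exact_mod_cast hm
    nlinarith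
  have hB0 : (0:ℝ) < B := by linarith
  have hL : Real.log 2 ≤ Real.log ((m:ℝ)+1) := by
    apply Real.log_le_log (by norm_num)
    have : (1:ℝ) ≤ (m:ℝ) := by exact_mod_cast hm
    linarith
  have hL0 : 0 < Real.log ((m:ℝ)+1) := lt_of_lt_of_le hlog2 hL
  have hBexp : B^(m+1) = Real.exp (((m:ℝ)+1) * Real.log B) := by
    rw [← Real.rpow_natCast B (m+1), Real.rpow_def_of_pos hB0]
    push_cast
    ring_nf
  have h2exp : (2:ℝ) ^ (C * ((m:ℝ) + 1) * Real.log ((m:ℝ) + 1))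
      = Real.exp (Real.log 2 * (C * ((m:ℝ)+1) * Real.log ((m:ℝ)+1))) :=
    Real.rpow_def_of_pos (by norm_num) _
  rw [hBexp]
  rw [show ((m:ℝ) + 1 : ℝ) = ((m:ℕ):ℝ) + 1 by push_cast; ring] at *
  rw [h2exp]
  apply Real.exp_le_exp.2
  have hlogB : Real.log B ≤ (2 + Real.log M / Real.log 2) * Real.log ((m:ℝ)+1) := by
    have hsplit : Real.log B = Real.log 2 + Real.log M + Real.log ((m:ℝ)+1) := by
      rw [hBdef2, Real.log_mul (by positivity) (by positivity),
        Real.log_mul (by norm_num) (by positivity)]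
    rw [hsplit]
    have hM' : Real.log M ≤ (Real.log M / Real.log 2) * Real.log ((m:ℝ)+1) := by
      rw [div_mul_eq_mul_div, le_div_iff₀ hlog2]
      have := mul_le_mul_of_nonneg_left hL hlogM
      linarith
    linarith
  have hrhs : Real.log 2 * (C * ((m:ℝ)+1) * Real.log ((m:ℝ)+1))
      = ((m:ℝ)+1) * ((2 + Real.log M / Real.log 2) * Real.log ((m:ℝ)+1)) := by
    rw [hCdef]
    field_simp
  rw [hrhs]
  exact mul_le_mul_of_nonneg_left hlogB (by positivity)
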